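/- Fix a real q > 1 and natural numbers m, n with n ≥ m + 2. Let f, g : ℕ → ℝ. If Σ_{k=m+1}^{n} (q^k − q^{k−1})·( f(k)·η(k−1) + g(k)·(Dη)(k) ) = 0 for every function η : ℕ → ℝ with η(m) = η(n) = 0, then (Dg)(k) = f(k) for all k with m + 2 ≤ k ≤ n. -/

import Mathlib

/-- The nabla derivative on the time scale `q^ℕ₀` (encoded by indices `k ∈ ℕ`):
`(Df)(k) = (f(k) − f(k−1)) / (q^k − q^{k−1})`. -/
noncomputable def qNabla (q : ℝ) (f : ℕ → ℝ) : ℕ → ℝ :=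
  fun k => (f k - f (k - 1)) / (q ^ k - q ^ (k - 1))

/-- du Bois-Reymond fundamental lemma of the nabla calculus of variations on the
q-scale: if `Σ_{k=m+1}^{n} (q^k − q^{k−1})·( f(k)·η(k−1) + g(k)·(Dη)(k) ) = 0` for
every `η : ℕ → ℝ` with `η(m) = η(n) = 0`, then `(Dg)(k) = f(k)` for `m+2 ≤ k ≤ n`. -/
theorem fundamental_lemma_duBoisReymond_qscale (q : ℝ) (hq : 1 < q) (m n : ℕ)
    (hmn : m + 2 ≤ n) (f g : ℕ → ℝ)
    (h : ∀ η : ℕ → ℝ, η m = 0 → η n = 0 →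
      ∑ k ∈ Finset.Icc (m + 1) n,
        (q ^ k - q ^ (k - 1)) * (f k * η (k - 1) + g k * qNabla q η k) = 0) :
    ∀ k : ℕ, m + 2 ≤ k → k ≤ n → qNabla q g k = f k := by
  intro k hk1 hk2
  obtain ⟨j, rfl⟩ : ∃ j, k = j + 2 := ⟨k - 2, by omega⟩
  have hq0 : (0 : ℝ) < q := by linarith
  have hpow : ∀ a b : ℕ, a < b → q ^ a < q ^ b := fun a b hab =>
    pow_lt_pow_right₀ hq hab
  have hne2 : q ^ (j + 2) - q ^ (j + 1) ≠ 0 := by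
    have := hpow (j + 1) (j + 2) (by omega); linarith
  have hne1 : q ^ (j + 1) - q ^ j ≠ 0 := by
    have := hpow j (j + 1) (by omega); linarith
  set η : ℕ → ℝ := fun i => if i = j + 1 then 1 else 0 with hη
  have hm : η m = 0 := by simp only [hη]; rw [if_neg (by omega)]
  have hn : η n = 0 := by simp only [hη]; rw [if_neg (by omega)]
  have hsum := h η hm hn
  set F : ℕ → ℝ := fun k =>
    (q ^ k - q ^ (k - 1)) * (f k * η (k - 1) + g k * qNabla q η k) with hF
  have hsub : ({j + 1, j + 2} : Finset ℕ) ⊆ Finset.Icc (m + 1) n := by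
    intro x hx
    simp only [Finset.mem_insert, Finset.mem_singleton] at hx
    simp only [Finset.mem_Icc]
    omega
  have hzero : ∀ x ∈ Finset.Icc (m + 1) n, x ∉ ({j + 1, j + 2} : Finset ℕ) → F x = 0 := by
    intro x hx hxn
    simp only [Finset.mem_insert, Finset.mem_singleton, not_or] at hxn
    simp only [Finset.mem_Icc] at hx
    have hx1 : x - 1 ≠ j + 1 := by omega
    have hx2 : x ≠ j + 1 := hxn.1
    simp only [hF, hη, qNabla, if_neg hx1, if_neg hx2]
    ring
  have hpair : ∑ k ∈ Finset.Icc (m + 1) n, F k = F (j + 1) + F (j + 2) := by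
    rw [← Finset.sum_subset hsub hzero, Finset.sum_pair (by omega : j + 1 ≠ j + 2)]
  rw [hpair] at hsum
  have e1 : F (j + 1) = g (j + 1) := by
    simp only [hF, hη, qNabla]
    have h1 : j + 1 - 1 = j := by omega
    rw [h1, if_neg (by omega : j ≠ j + 1)]; simp only [if_true]
    field_simp
    ring
  have e2 : F (j + 2) = (q ^ (j + 2) - q ^ (j + 1)) * f (j + 2) - g (j + 2) := by
    simp only [hF, hη, qNabla]
    have h1 : j + 2 - 1 = j + 1 := by omega
    rw [h1, if_neg (by omega : j + 2 ≠ j + 1)]; simp only [if_true]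
    field_simp
    ring
  rw [e1, e2] at hsum
  simp only [qNabla]
  have h1 : j + 2 - 1 = j + 1 := by omega
  rw [h1]
  field_simp
  linarith
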